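/- arXiv:2103.13848 — 6 statements merged into one kernel-verified Lean document; each statement's English description precedes it below -/
import Mathlib

section
/- Any square-like quadrilateral pqrs in ℝⁿ (equal sides, equal diagonals) has the property that the sum of the exterior (turning) angles at q and r along the open polygonal path p→q→r→s is at least π, with equality if and only if pqrs is a planar square (i.e., the diagonal length equals √2 times the side length). -/
open EuclideanGeometry InnerProductGeometry
open scoped RealInnerProductSpace

/-- For a square-like quadrilateral `pqrs` in `ℝⁿ` (equal sides
of positive length `a`, equal diagonals, no three consecutive vertices collinear),
the sum of the exterior turning angles at `q` and `r` along the open path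
`p → q → r → s` is at least `π`, with equality if and only if `pqrs` is a planar
square, i.e. the diagonal length equals `√2` times the side length. -/
theorem slq_turning_ge_pi {n : ℕ} (p q r s : EuclideanSpace ℝ (Fin n)) (a : ℝ)
    (ha : 0 < a)
    (h1 : ‖p - q‖ = a) (h2 : ‖q - r‖ = a) (h3 : ‖r - s‖ = a) (h4 : ‖s - p‖ = a)
    (h5 : ‖p - r‖ = ‖q - s‖)
    (hc1 : ¬ Collinear ℝ ({p, q, r} : Set (EuclideanSpace ℝ (Fin n))))
    (hc2 : ¬ Collinear ℝ ({q, r, s} : Set (EuclideanSpace ℝ (Fin n)))) :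
    Real.pi ≤ (Real.pi - EuclideanGeometry.angle p q r) +
        (Real.pi - EuclideanGeometry.angle q r s) ∧
    ((Real.pi - EuclideanGeometry.angle p q r) +
        (Real.pi - EuclideanGeometry.angle q r s) = Real.pi ↔
      ‖p - r‖ = Real.sqrt 2 * a) := by
  have hpr : p ≠ r := by
    intro h
    apply hc1
    apply Collinear.subset _ (collinear_pair ℝ p q)
    intro x hx
    simp only [Set.mem_insert_iff, Set.mem_singleton_iff] at hx ⊢
    rcases hx with hx | hx | hx
    · exact Or.inl hx
    · exact Or.inr hx
    · exact Or.inl (hx.trans h.symm)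
  obtain ⟨D, hDdef⟩ : ∃ D : ℝ, ‖p - r‖ ^ 2 = D := ⟨_, rfl⟩
  have hD0 : 0 < D := by
    have h' : (0:ℝ) < ‖p - r‖ := norm_pos_iff.mpr (sub_ne_zero.mpr hpr)
    rw [← hDdef]
    positivity
  have hA : (0:ℝ) < a ^ 2 := by positivity
  set u : EuclideanSpace ℝ (Fin n) := q - p with hu_def
  set v : EuclideanSpace ℝ (Fin n) := r - q with hv_def
  set w : EuclideanSpace ℝ (Fin n) := s - r with hw_def
  have hu : ‖u‖ = a := by rw [hu_def, norm_sub_rev]; exact h1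
  have hv : ‖v‖ = a := by rw [hv_def, norm_sub_rev]; exact h2
  have hw : ‖w‖ = a := by rw [hw_def, norm_sub_rev]; exact h3
  have huv : ‖u + v‖ ^ 2 = D := by
    have h' : u + v = r - p := by rw [hu_def, hv_def]; abel
    rw [h', norm_sub_rev, hDdef]
  have hvw : ‖v + w‖ ^ 2 = D := by
    have h' : v + w = s - q := by rw [hv_def, hw_def]; abel
    rw [h', norm_sub_rev, ← h5, hDdef]
  have huvw : ‖u + v + w‖ ^ 2 = a ^ 2 := by
    have : u + v + w = s - p := by rw [hu_def, hv_def, hw_def]; abel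
    rw [this, h4]
  -- inner products
  have e1 : ⟪u, v⟫ = (D - 2 * a ^ 2) / 2 := by
    have := norm_add_sq_real u v
    rw [huv, hu, hv] at this
    linarith
  have e2 : ⟪v, w⟫ = (D - 2 * a ^ 2) / 2 := by
    have := norm_add_sq_real v w
    rw [hvw, hv, hw] at this
    linarith
  have e3 : ⟪u, w⟫ = a ^ 2 - D := by
    have h' := norm_add_sq_real (u + v) w
    rw [huvw, huv, hw] at h'
    rw [inner_add_left, e2] at h'
    linarith
  -- key inequality D ≤ 2a²
  have e1' : ⟪v, u⟫ = (D - 2 * a ^ 2) / 2 := by rw [real_inner_comm]; exact e1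
  have e2' : ⟪w, v⟫ = (D - 2 * a ^ 2) / 2 := by rw [real_inner_comm]; exact e2
  have e3' : ⟪w, u⟫ = a ^ 2 - D := by rw [real_inner_comm]; exact e3
  have hkey : D ≤ 2 * a ^ 2 := by
    have h0 : (0:ℝ) ≤ ‖(a ^ 2) • (u + w) - (D - 2 * a ^ 2) • v‖ ^ 2 := sq_nonneg _
    have hexp : ‖(a ^ 2) • (u + w) - (D - 2 * a ^ 2) • v‖ ^ 2
        = a ^ 2 * D * (2 * a ^ 2 - D) := by
      rw [← real_inner_self_eq_norm_sq]
      simp only [inner_sub_left, inner_sub_right, inner_add_left, inner_add_right,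
        real_inner_smul_left, real_inner_smul_right]
      rw [real_inner_self_eq_norm_sq u, real_inner_self_eq_norm_sq v,
        real_inner_self_eq_norm_sq w, hu, hv, hw]
      simp only [e1, e2, e3, e1', e2', e3']
      ring
    have hprod : 0 ≤ a ^ 2 * D * (2 * a ^ 2 - D) := hexp ▸ h0
    nlinarith [hprod, mul_pos hA hD0]
  -- both angles equal arccos (1 - D/(2a²))
  have h2a : (2 : ℝ) * a ^ 2 ≠ 0 := by positivity
  obtain ⟨c, hc_def⟩ : ∃ c : ℝ, 1 - D / (2 * a ^ 2) = c := ⟨_, rfl⟩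
  have hip1 : ⟪p - q, r - q⟫ = (2 * a ^ 2 - D) / 2 := by
    have h' := norm_sub_sq_real (p - q) (r - q)
    have hs : p - q - (r - q) = p - r := by abel
    rw [hs, h1, norm_sub_rev r q, h2, hDdef] at h'
    linarith
  have hip2 : ⟪q - r, s - r⟫ = (2 * a ^ 2 - D) / 2 := by
    have h' := norm_sub_sq_real (q - r) (s - r)
    have hs : q - r - (s - r) = q - s := by abel
    rw [hs, h2, norm_sub_rev s r, h3, ← h5, hDdef] at h'
    linarith
  have harg : (2 * a ^ 2 - D) / 2 / (a * a) = c := by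
    rw [← hc_def, div_div, show (2:ℝ) * (a * a) = 2 * a ^ 2 by ring, sub_div,
      div_self h2a]
  have hang1 : EuclideanGeometry.angle p q r = Real.arccos c := by
    rw [EuclideanGeometry.angle, vsub_eq_sub, vsub_eq_sub, InnerProductGeometry.angle,
      hip1, h1, norm_sub_rev r q, h2, harg]
  have hang2 : EuclideanGeometry.angle q r s = Real.arccos c := by
    rw [EuclideanGeometry.angle, vsub_eq_sub, vsub_eq_sub, InnerProductGeometry.angle,
      hip2, h2, norm_sub_rev s r, h3, harg]
  have hc_nonneg : 0 ≤ c := by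
    rw [← hc_def]
    have h' : D / (2 * a ^ 2) ≤ 1 := by
      rw [div_le_one (by positivity)]
      exact hkey
    linarith
  have harc : Real.arccos c ≤ Real.pi / 2 := Real.arccos_le_pi_div_two.mpr hc_nonneg
  have hD_iff : D = 2 * a ^ 2 ↔ ‖p - r‖ = Real.sqrt 2 * a := by
    constructor
    · intro h
      have h' : ‖p - r‖ = Real.sqrt D := by
        rw [← hDdef, Real.sqrt_sq (norm_nonneg _)]
      rw [h', h, Real.sqrt_mul (by norm_num), Real.sqrt_sq ha.le]
    · intro h
      rw [← hDdef, h, mul_pow, Real.sq_sqrt (by norm_num : (0:ℝ) ≤ 2)]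
  constructor
  · rw [hang1, hang2]
    linarith
  · rw [hang1, hang2]
    constructor
    · intro h
      have : Real.arccos c = Real.pi / 2 := by linarith
      have hc0 : c = 0 := Real.arccos_eq_pi_div_two.mp this
      apply hD_iff.mp
      rw [← hc_def] at hc0
      have h1' : D / (2 * a ^ 2) = 1 := by linarith
      rw [div_eq_one_iff_eq h2a] at h1'
      exact h1'
    · intro h
      have hD2 : D = 2 * a ^ 2 := hD_iff.mpr h
      have hc0 : c = 0 := by
        rw [← hc_def, hD2, div_self h2a]
        ring
      rw [hc0, Real.arccos_zero]
      ring
end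

section
/- If pqrs is a square-like quadrilateral in ℝ² (equal sides and equal diagonals, with positive side length), then pqrs is a square: the diagonals have length √2 times the side length, and adjacent sides are perpendicular. -/
open scoped InnerProductSpace

lemma aux_coords_ne (y : EuclideanSpace ℝ (Fin 2)) (hy : y ≠ 0) :
    y 0 ≠ 0 ∨ y 1 ≠ 0 := by
  by_contra h
  push_neg at h
  exact hy (PiLp.ext fun i => by fin_cases i <;> simp [h.1, h.2])

lemma aux_perp_zero (x y z : EuclideanSpace ℝ (Fin 2)) (hy : y ≠ 0) (hz : z ≠ 0)
    (hyz : ⟪y, z⟫_ℝ = 0) (hxy : ⟪x, y⟫_ℝ = 0) (hxz : ⟪x, z⟫_ℝ = 0) : x = 0 := by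
  have hy' : (0:ℝ) < y 0 * y 0 + y 1 * y 1 := by
    rcases aux_coords_ne y hy with h | h <;> nlinarith [mul_self_pos.2 h, mul_self_nonneg (y 0), mul_self_nonneg (y 1)]
  have hz' : (0:ℝ) < z 0 * z 0 + z 1 * z 1 := by
    rcases aux_coords_ne z hz with h | h <;> nlinarith [mul_self_pos.2 h, mul_self_nonneg (z 0), mul_self_nonneg (z 1)]
  simp only [PiLp.inner_apply, RCLike.inner_apply, conj_trivial, Fin.sum_univ_two] at hyz hxy hxz
  have hdet : (y 0 * z 1 - y 1 * z 0) ^ 2 = (y 0 * y 0 + y 1 * y 1) * (z 0 * z 0 + z 1 * z 1) := by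
    nlinarith [sq_nonneg (y 0 * z 0 + y 1 * z 1)]
  have hdet' : y 0 * z 1 - y 1 * z 0 ≠ 0 := by
    intro h
    rw [h] at hdet
    nlinarith
  have h0 : x 0 = 0 := by
    have : x 0 * (y 0 * z 1 - y 1 * z 0) = 0 := by linear_combination z 1 * hxy - y 1 * hxz
    exact (mul_eq_zero.1 this).resolve_right hdet'
  have h1 : x 1 = 0 := by
    have : x 1 * (y 0 * z 1 - y 1 * z 0) = 0 := by linear_combination y 0 * hxz - z 0 * hxy
    exact (mul_eq_zero.1 this).resolve_right hdet'
  ext i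
  fin_cases i <;> simp [h0, h1]

lemma aux_expand_sub {E : Type*} [NormedAddCommGroup E] [InnerProductSpace ℝ E] (u w : E) :
    ⟪u - w, u - w⟫_ℝ = ⟪u, u⟫_ℝ - 2 * ⟪u, w⟫_ℝ + ⟪w, w⟫_ℝ := by
  simp only [inner_sub_left, inner_sub_right, real_inner_comm w u]
  ring

lemma aux_expand_add {E : Type*} [NormedAddCommGroup E] [InnerProductSpace ℝ E] (u w : E) :
    ⟪u + w, u + w⟫_ℝ = ⟪u, u⟫_ℝ + 2 * ⟪u, w⟫_ℝ + ⟪w, w⟫_ℝ := by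
  simp only [inner_add_left, inner_add_right, real_inner_comm w u]
  ring

/-- A square-like quadrilateral `pqrs` in `ℝ²` (equal sides of
positive length `a`, equal diagonals, distinct vertices) is a square:
the diagonals have length `√2 · a` and adjacent sides are perpendicular. -/
theorem planar_slq_is_square (p q r s : EuclideanSpace ℝ (Fin 2)) (a : ℝ)
    (ha : 0 < a)
    (h1 : ‖p - q‖ = a) (h2 : ‖q - r‖ = a) (h3 : ‖r - s‖ = a) (h4 : ‖s - p‖ = a)
    (h5 : ‖p - r‖ = ‖q - s‖)
    (hpq : p ≠ q) (hqr : q ≠ r) (hrs : r ≠ s) (hsp : s ≠ p)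
    (hpr : p ≠ r) (hqs : q ≠ s) :
    ‖p - r‖ = a * Real.sqrt 2 ∧ ⟪q - p, s - p⟫_ℝ = 0 := by
  obtain ⟨u, hu⟩ : ∃ u, u = q - p := ⟨_, rfl⟩
  obtain ⟨v, hv⟩ : ∃ v, v = s - p := ⟨_, rfl⟩
  obtain ⟨w, hw⟩ : ∃ w, w = r - p := ⟨_, rfl⟩
  have huw : u - w = q - r := by rw [hu, hw]; abel
  have hvw : w - v = r - s := by rw [hv, hw]; abel
  have huv : u - v = q - s := by rw [hu, hv]; abel
  have hA : ⟪u, u⟫_ℝ = a ^ 2 := by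
    rw [real_inner_self_eq_norm_sq, hu, norm_sub_rev, h1]
  have hB : ⟪v, v⟫_ℝ = a ^ 2 := by
    rw [real_inner_self_eq_norm_sq, hv, h4]
  have hC : ⟪u, u⟫_ℝ - 2 * ⟪u, w⟫_ℝ + ⟪w, w⟫_ℝ = a ^ 2 := by
    rw [← aux_expand_sub, real_inner_self_eq_norm_sq, huw, h2]
  have hD : ⟪w, w⟫_ℝ - 2 * ⟪w, v⟫_ℝ + ⟪v, v⟫_ℝ = a ^ 2 := by
    rw [← aux_expand_sub, real_inner_self_eq_norm_sq, hvw, h3]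
  have hE : ⟪w, w⟫_ℝ = ⟪u, u⟫_ℝ - 2 * ⟪u, v⟫_ℝ + ⟪v, v⟫_ℝ := by
    rw [← aux_expand_sub, real_inner_self_eq_norm_sq, real_inner_self_eq_norm_sq, huv, hw,
      norm_sub_rev, h5]
  have hvw' : ⟪v, w⟫_ℝ = ⟪w, v⟫_ℝ := real_inner_comm w v
  have huw' : ⟪u, w⟫_ℝ = ⟪w, u⟫_ℝ := real_inner_comm w u
  have huv' : ⟪u, v⟫_ℝ = ⟪v, u⟫_ℝ := real_inner_comm v u
  have hwuv : ⟪w, u - v⟫_ℝ = 0 := by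
    rw [inner_sub_right]; linarith
  have hx1 : ⟪u + v - w, w⟫_ℝ = 0 := by
    simp only [inner_sub_left, inner_add_left]; linarith
  have hx2 : ⟪u + v - w, u - v⟫_ℝ = 0 := by
    simp only [inner_sub_left, inner_add_left, inner_sub_right]; linarith
  have hwne : w ≠ 0 := by rw [hw]; exact sub_ne_zero.2 (Ne.symm hpr)
  have huvne : u - v ≠ 0 := by rw [huv]; exact sub_ne_zero.2 hqs
  have hx0 : u + v - w = 0 := aux_perp_zero _ _ _ hwne huvne hwuv hx1 hx2
  have hweq : w = u + v := (sub_eq_zero.1 hx0).symm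
  have hE' := hE
  rw [hweq, aux_expand_add] at hE'
  have ht : ⟪u, v⟫_ℝ = 0 := by linarith
  refine ⟨?_, by rw [← hu, ← hv]; exact ht⟩
  have hW : ⟪w, w⟫_ℝ = 2 * a ^ 2 := by rw [hE, ht]; linarith
  have hn : ‖p - r‖ ^ 2 = (a * Real.sqrt 2) ^ 2 := by
    have e1 := real_inner_self_eq_norm_sq w
    rw [hW, hw, norm_sub_rev] at e1
    rw [mul_pow, Real.sq_sqrt (by norm_num : (0:ℝ) ≤ 2)]
    linarith
  rw [← Real.sqrt_sq (norm_nonneg (p - r)), hn, Real.sqrt_sq (by positivity)]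
end

section
/- For rectifiable curves K and L in ℝⁿ of finite total curvature, |Len(K) − Len(L)| ≤ δ(K,L)·(π·max{TC(K),TC(L)} + 2), where δ(K,L) is the Fréchet distance between K and L, Len denotes arclength, and TC denotes total curvature. -/
noncomputable section

/-- Sum of the exterior turning angles of the polygonal path through the given
list of vertices. -/
def turnSum {n : ℕ} : List (EuclideanSpace ℝ (Fin n)) → ℝ
  | a :: b :: c :: rest =>
      InnerProductGeometry.angle (b - a) (c - b) + turnSum (b :: c :: rest)
  | _ => 0

/-- The set of turning-angle sums of polygons inscribed in `γ`, with vertex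
parameters drawn (in increasing order) from `[0,1]`. -/
def tcSet {n : ℕ} (γ : ℝ → EuclideanSpace ℝ (Fin n)) : Set ℝ :=
  {x | ∃ t : List ℝ, t.Chain' (· < ·) ∧ (∀ u ∈ t, u ∈ Set.Icc (0:ℝ) 1) ∧
    x = turnSum (t.map γ)}

/-- The total curvature of the curve `γ : [0,1] → ℝⁿ`: the supremum of the
turning-angle sums of inscribed polygons. -/
def totCurv {n : ℕ} (γ : ℝ → EuclideanSpace ℝ (Fin n)) : ℝ := sSup (tcSet γ)

/-- The arclength of the curve `γ : [0,1] → ℝⁿ`. -/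
def len {n : ℕ} (γ : ℝ → EuclideanSpace ℝ (Fin n)) : ℝ :=
  (eVariationOn γ (Set.Icc 0 1)).toReal

/-- The Fréchet distance between the curves `K, L : [0,1] → ℝⁿ`: the infimum
over (strictly monotone, continuous, endpoint-preserving) reparametrizations
`σ` of the supremum of `‖K t − L (σ t)‖`. -/
def frechetDist {n : ℕ} (K L : ℝ → EuclideanSpace ℝ (Fin n)) : ℝ :=
  ⨅ σ : {f : ℝ → ℝ // ContinuousOn f (Set.Icc 0 1) ∧
      StrictMonoOn f (Set.Icc 0 1) ∧ f 0 = 0 ∧ f 1 = 1},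
    ⨆ t : Set.Icc (0:ℝ) 1, ‖K t - L (σ.1 t)‖

/-! ### Auxiliary definitions and lemmas -/

/-- Length of a polygonal path through the given list of vertices. -/
def polyLen {n : ℕ} : List (EuclideanSpace ℝ (Fin n)) → ℝ
  | a :: b :: rest => ‖b - a‖ + polyLen (b :: rest)
  | _ => 0

lemma polyLen_nonneg {n : ℕ} : ∀ p : List (EuclideanSpace ℝ (Fin n)), 0 ≤ polyLen p
  | [] => le_refl 0
  | [_] => le_refl 0
  | a :: b :: rest => by
      rw [polyLen]
      exact add_nonneg (norm_nonneg _) (polyLen_nonneg (b :: rest))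

lemma turnSum_nonneg {n : ℕ} : ∀ p : List (EuclideanSpace ℝ (Fin n)), 0 ≤ turnSum p
  | [] => le_refl 0
  | [_] => le_refl 0
  | [_, _] => le_refl 0
  | a :: b :: c :: rest => by
      rw [turnSum]
      exact add_nonneg (InnerProductGeometry.angle_nonneg _ _) (turnSum_nonneg (b :: c :: rest))

/-- The distance between the unit vectors in the directions of `u` and `v` is at
most the angle between `u` and `v`. -/
lemma norm_unit_sub_unit_le_angle {n : ℕ} {u v : EuclideanSpace ℝ (Fin n)}
    (hu : u ≠ 0) (hv : v ≠ 0) :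
    ‖‖u‖⁻¹ • u - ‖v‖⁻¹ • v‖ ≤ InnerProductGeometry.angle u v := by
  set a := ‖u‖⁻¹ • u with ha
  set b := ‖v‖⁻¹ • v with hb
  have hna : ‖a‖ = 1 := by
    rw [ha, norm_smul, norm_inv, norm_norm, inv_mul_cancel₀ (norm_ne_zero_iff.2 hu)]
  have hnb : ‖b‖ = 1 := by
    rw [hb, norm_smul, norm_inv, norm_norm, inv_mul_cancel₀ (norm_ne_zero_iff.2 hv)]
  set θ := InnerProductGeometry.angle u v with hθ
  have hθab : InnerProductGeometry.angle a b = θ := by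
    rw [ha, hb, InnerProductGeometry.angle_smul_left_of_pos, InnerProductGeometry.angle_smul_right_of_pos]
    · exact inv_pos.2 (norm_pos_iff.2 hv)
    · exact inv_pos.2 (norm_pos_iff.2 hu)
  have hinner : (inner ℝ a b : ℝ) = Real.cos θ := by
    have := InnerProductGeometry.cos_angle a b
    rw [hθab, hna, hnb, mul_one, div_one] at this
    exact this.symm
  have hθ0 : 0 ≤ θ := InnerProductGeometry.angle_nonneg u v
  have hθpi : θ ≤ Real.pi := InnerProductGeometry.angle_le_pi u v
  have hsq : ‖a - b‖ ^ 2 = 2 - 2 * Real.cos θ := by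
    rw [norm_sub_sq_real, hna, hnb, hinner]; ring
  have hsin : Real.sin (θ/2) ^ 2 = (1 - Real.cos θ)/2 := by
    have h := Real.abs_sin_half θ
    have h2 : |Real.sin (θ/2)| ^ 2 = ((1 - Real.cos θ)/2) := by
      rw [h, Real.sq_sqrt]
      have := Real.cos_le_one θ; linarith
    rwa [sq_abs] at h2
  have hsinle : Real.sin (θ/2) ≤ θ/2 := Real.sin_le (by linarith)
  have hsin0 : 0 ≤ Real.sin (θ/2) := by
    apply Real.sin_nonneg_of_nonneg_of_le_pi (by linarith)
    linarith [Real.pi_nonneg]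
  have hsq' : ‖a - b‖ ^ 2 ≤ θ ^ 2 := by
    have : Real.sin (θ/2) ^ 2 ≤ (θ/2) ^ 2 := by
      apply pow_le_pow_left₀ hsin0 hsinle
    rw [hsq]
    nlinarith [hsin]
  calc ‖a - b‖ = Real.sqrt (‖a - b‖ ^ 2) := (Real.sqrt_sq (norm_nonneg _)).symm
    _ ≤ Real.sqrt (θ ^ 2) := Real.sqrt_le_sqrt hsq'
    _ = θ := Real.sqrt_sq hθ0

lemma inner_self_unit {n : ℕ} {v : EuclideanSpace ℝ (Fin n)} (hv : v ≠ 0) :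
    (inner ℝ v (‖v‖⁻¹ • v) : ℝ) = ‖v‖ := by
  rw [real_inner_smul_right, real_inner_self_eq_norm_sq, sq,
    inv_mul_cancel_left₀ (norm_ne_zero_iff.2 hv)]

lemma inner_le_of_norm_le {n : ℕ} {x u : EuclideanSpace ℝ (Fin n)} {ε : ℝ}
    (hx : ‖x‖ ≤ ε) (hu : ‖u‖ = 1) : (inner ℝ x u : ℝ) ≤ ε := by
  calc (inner ℝ x u : ℝ) ≤ ‖x‖ * ‖u‖ := real_inner_le_norm x u
    _ = ‖x‖ := by rw [hu, mul_one]
    _ ≤ ε := hx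

lemma norm_unit {n : ℕ} {v : EuclideanSpace ℝ (Fin n)} (hv : v ≠ 0) :
    ‖‖v‖⁻¹ • v‖ = 1 := by
  rw [norm_smul, norm_inv, norm_norm, inv_mul_cancel₀ (norm_ne_zero_iff.2 hv)]

/-- Key estimate (with telescoping boundary term): if two polygons have
pointwise `ε`-close vertex lists, the length of the first is controlled by the
length of the second plus `ε` times its turning sum. -/
lemma key_aux {n : ℕ} {ε : ℝ} (hε : 0 ≤ ε) :
    ∀ (r r' : List (EuclideanSpace ℝ (Fin n))) (a b a' b' : EuclideanSpace ℝ (Fin n)),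
      List.Forall₂ (fun x y => ‖x - y‖ ≤ ε) (a :: b :: r) (a' :: b' :: r') →
      (a :: b :: r).Chain' (· ≠ ·) →
      polyLen (a :: b :: r) ≤ polyLen (a' :: b' :: r') + ε * turnSum (a :: b :: r) + ε
        - inner ℝ (a - a') (‖b - a‖⁻¹ • (b - a))
  | [], r', a, b, a', b', hf, hc => by
    obtain ⟨ha, hb, hr'⟩ : ‖a - a'‖ ≤ ε ∧ ‖b - b'‖ ≤ ε ∧ r' = [] := by
      cases hf with
      | cons h1 h2 => cases h2 with
        | cons h3 h4 => cases h4; exact ⟨h1, h3, rfl⟩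
    subst hr'
    have hba : b - a ≠ 0 := sub_ne_zero.2 (Ne.symm (List.isChain_cons_cons.1 hc).1)
    set u := ‖b - a‖⁻¹ • (b - a) with hu
    have hnu : ‖u‖ = 1 := norm_unit hba
    have h1 : ‖b - a‖ = inner ℝ (b - a) u := (inner_self_unit hba).symm
    have hsplit : (b : EuclideanSpace ℝ (Fin n)) - a = (b' - a') + (b - b') - (a - a') := by
      abel
    have h2 : (inner ℝ (b - a) u : ℝ)
        = inner ℝ (b' - a') u + inner ℝ (b - b') u - inner ℝ (a - a') u := by
      rw [hsplit, inner_sub_left, inner_add_left]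
    have h3 : (inner ℝ (b' - a') u : ℝ) ≤ ‖b' - a'‖ := by
      calc (inner ℝ (b' - a') u : ℝ) ≤ ‖b' - a'‖ * ‖u‖ := real_inner_le_norm _ _
        _ = ‖b' - a'‖ := by rw [hnu, mul_one]
    have h4 : (inner ℝ (b - b') u : ℝ) ≤ ε := inner_le_of_norm_le hb hnu
    have hts : turnSum [a, b] = 0 := rfl
    simp only [polyLen, hts, mul_zero]
    rw [h1]
    linarith [h2, h3, h4]
  | c :: r2, r', a, b, a', b', hf, hc => by
    obtain ⟨c', r2', ha, hf2, hr'⟩ :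
        ∃ c' r2', ‖a - a'‖ ≤ ε ∧
          List.Forall₂ (fun x y => ‖x - y‖ ≤ ε) (b :: c :: r2) (b' :: c' :: r2') ∧
          r' = c' :: r2' := by
      cases hf with
      | cons h1 h2 => cases h2 with
        | cons h3 h4 => cases h4 with
          | cons h5 h6 => exact ⟨_, _, h1, List.Forall₂.cons h3 (List.Forall₂.cons h5 h6), rfl⟩
    subst hr'
    obtain ⟨hb, _⟩ := List.forall₂_cons.1 hf2
    have hab : a ≠ b := (List.isChain_cons_cons.1 hc).1
    have hctail : (b :: c :: r2).Chain' (· ≠ ·) := (List.isChain_cons_cons.1 hc).2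
    have hbc : b ≠ c := (List.isChain_cons_cons.1 hctail).1
    have hba : b - a ≠ 0 := sub_ne_zero.2 (Ne.symm hab)
    have hcb : c - b ≠ 0 := sub_ne_zero.2 (Ne.symm hbc)
    set u0 := ‖b - a‖⁻¹ • (b - a) with hu0
    set u1 := ‖c - b‖⁻¹ • (c - b) with hu1
    have hnu0 : ‖u0‖ = 1 := norm_unit hba
    have edge : ‖b - a‖ ≤ ‖b' - a'‖ + inner ℝ (b - b') u0 - inner ℝ (a - a') u0 := by
      have h1 : ‖b - a‖ = inner ℝ (b - a) u0 := (inner_self_unit hba).symm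
      have hsplit : (b : EuclideanSpace ℝ (Fin n)) - a = (b' - a') + (b - b') - (a - a') := by
        abel
      have h2 : (inner ℝ (b - a) u0 : ℝ)
          = inner ℝ (b' - a') u0 + inner ℝ (b - b') u0 - inner ℝ (a - a') u0 := by
        rw [hsplit, inner_sub_left, inner_add_left]
      have h3 : (inner ℝ (b' - a') u0 : ℝ) ≤ ‖b' - a'‖ := by
        calc (inner ℝ (b' - a') u0 : ℝ) ≤ ‖b' - a'‖ * ‖u0‖ := real_inner_le_norm _ _
          _ = ‖b' - a'‖ := by rw [hnu0, mul_one]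
      linarith [h1, h2, h3]
    have IH := key_aux hε r2 r2' b c b' c' hf2 hctail
    have cross : (inner ℝ (b - b') u0 : ℝ) - inner ℝ (b - b') u1
        ≤ ε * InnerProductGeometry.angle (b - a) (c - b) := by
      have h1 : (inner ℝ (b - b') u0 : ℝ) - inner ℝ (b - b') u1 = inner ℝ (b - b') (u0 - u1) := by
        rw [inner_sub_right]
      have h2 : (inner ℝ (b - b') (u0 - u1) : ℝ) ≤ ‖b - b'‖ * ‖u0 - u1‖ := real_inner_le_norm _ _
      have h3 : ‖u0 - u1‖ ≤ InnerProductGeometry.angle (b - a) (c - b) :=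
        norm_unit_sub_unit_le_angle hba hcb
      calc (inner ℝ (b - b') u0 : ℝ) - inner ℝ (b - b') u1 ≤ ‖b - b'‖ * ‖u0 - u1‖ := by
            rw [h1]; exact h2
        _ ≤ ε * InnerProductGeometry.angle (b - a) (c - b) :=
            mul_le_mul hb h3 (norm_nonneg _) hε
    have hplp : polyLen (a :: b :: c :: r2) = ‖b - a‖ + polyLen (b :: c :: r2) := rfl
    have hplq : polyLen (a' :: b' :: c' :: r2') = ‖b' - a'‖ + polyLen (b' :: c' :: r2') := rfl
    have hts : turnSum (a :: b :: c :: r2)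
        = InnerProductGeometry.angle (b - a) (c - b) + turnSum (b :: c :: r2) := rfl
    rw [hplp, hplq, hts]
    have expand : ε * (InnerProductGeometry.angle (b - a) (c - b) + turnSum (b :: c :: r2))
        = ε * InnerProductGeometry.angle (b - a) (c - b) + ε * turnSum (b :: c :: r2) := by ring
    rw [expand]
    linarith [edge, IH, cross]

/-- Key estimate: polygons with pointwise `ε`-close vertex lists have lengths
differing by at most `ε * (turning sum + 2)`. -/
lemma key {n : ℕ} {ε : ℝ} (hε : 0 ≤ ε) {p q : List (EuclideanSpace ℝ (Fin n))}
    (h : List.Forall₂ (fun x y => ‖x - y‖ ≤ ε) p q) (hne : p.Chain' (· ≠ ·)) :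
    polyLen p ≤ polyLen q + ε * (turnSum p + 2) := by
  match p, q, h with
  | [], q, h =>
    have : polyLen ([] : List (EuclideanSpace ℝ (Fin n))) = 0 := rfl
    rw [this]
    have := polyLen_nonneg q
    have := turnSum_nonneg ([] : List (EuclideanSpace ℝ (Fin n)))
    nlinarith
  | [a], q, h =>
    obtain ⟨a', rfl⟩ : ∃ a', q = [a'] := by
      cases h with
      | cons h1 h2 => cases h2; exact ⟨_, rfl⟩
    have h0 : polyLen [a] = 0 := rfl
    have h1 : polyLen [a'] = 0 := rfl
    have h2 : turnSum [a] = 0 := rfl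
    rw [h0, h1, h2]
    nlinarith
  | a :: b :: r, q, h =>
    obtain ⟨a', b', r', rfl⟩ : ∃ a' b' r', q = a' :: b' :: r' := by
      cases h with
      | cons h1 h2 => cases h2 with
        | cons h3 h4 => exact ⟨_, _, _, rfl⟩
    have ha : ‖a - a'‖ ≤ ε := (List.forall₂_cons.1 h).1
    have hab : a ≠ b := (List.isChain_cons_cons.1 hne).1
    have hba : b - a ≠ 0 := sub_ne_zero.2 (Ne.symm hab)
    have main := key_aux hε r r' a b a' b' h hne
    have hlast : -(inner ℝ (a - a') (‖b - a‖⁻¹ • (b - a)) : ℝ) ≤ ε := by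
      have h1 : |(inner ℝ (a - a') (‖b - a‖⁻¹ • (b - a)) : ℝ)|
          ≤ ‖a - a'‖ * ‖‖b - a‖⁻¹ • (b - a)‖ := abs_real_inner_le_norm _ _
      rw [norm_unit hba, mul_one] at h1
      have := abs_le.1 h1
      linarith
    have : polyLen (a :: b :: r) ≤ polyLen (a' :: b' :: r') + ε * turnSum (a :: b :: r) + 2 * ε := by
      linarith
    linarith

lemma chain_le_getLastD : ∀ (r : List ℝ) (x : ℝ), (x :: r).Chain' (· ≤ ·) → x ≤ r.getLastD x
  | [], x, _ => le_refl x
  | y :: r', x, h => by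
    rw [List.getLastD_cons]
    have h1 : x ≤ y := (List.isChain_cons_cons.1 h).1
    exact h1.trans (chain_le_getLastD r' y (List.isChain_cons_cons.1 h).2)

lemma polyLen_le_var {n : ℕ} (K : ℝ → EuclideanSpace ℝ (Fin n)) :
    ∀ (r : List ℝ) (x : ℝ), (x :: r).Chain' (· ≤ ·) →
      ENNReal.ofReal (polyLen ((x :: r).map K))
        ≤ eVariationOn K (Set.Icc x (r.getLastD x))
  | [], x, _ => by simp [polyLen]
  | y :: r', x, h => by
    have hxy : x ≤ y := (List.isChain_cons_cons.1 h).1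
    have hch : (y :: r').Chain' (· ≤ ·) := (List.isChain_cons_cons.1 h).2
    have hyL : y ≤ r'.getLastD y := chain_le_getLastD r' y hch
    have IH := polyLen_le_var K r' y hch
    have hplit : polyLen (((x :: y :: r')).map K)
        = ‖K y - K x‖ + polyLen ((y :: r').map K) := rfl
    rw [List.getLastD_cons, hplit,
      ENNReal.ofReal_add (norm_nonneg _) (polyLen_nonneg _)]
    have h1 : ENNReal.ofReal ‖K y - K x‖ ≤ eVariationOn K (Set.Icc x y) := by
      have := eVariationOn.edist_le K (Set.left_mem_Icc.2 hxy) (Set.right_mem_Icc.2 hxy)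
      rwa [edist_dist, dist_eq_norm, norm_sub_rev] at this
    have h2 := eVariationOn.Icc_add_Icc (s := Set.univ) K hxy hyL (Set.mem_univ y)
    simp only [Set.univ_inter] at h2
    calc ENNReal.ofReal ‖K y - K x‖ + ENNReal.ofReal (polyLen ((y :: r').map K))
        ≤ eVariationOn K (Set.Icc x y) + eVariationOn K (Set.Icc y (r'.getLastD y)) :=
          add_le_add h1 IH
      _ = eVariationOn K (Set.Icc x (r'.getLastD y)) := h2

/-- Any polygon inscribed in `K` (monotone parameters in `[0,1]`) has length at
most the arclength of `K`. -/
lemma polyLen_le_len {n : ℕ} (K : ℝ → EuclideanSpace ℝ (Fin n))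
    (hKr : BoundedVariationOn K (Set.Icc 0 1)) :
    ∀ (l : List ℝ), l.Chain' (· ≤ ·) → (∀ u ∈ l, u ∈ Set.Icc (0:ℝ) 1) →
      polyLen (l.map K) ≤ len K
  | [], _, _ => by
    simp [polyLen, len, ENNReal.toReal_nonneg]
  | x :: r, h, hm => by
    have h1 := polyLen_le_var K r x h
    have hsub : Set.Icc x (r.getLastD x) ⊆ Set.Icc (0:ℝ) 1 := by
      apply Set.Icc_subset_Icc
      · exact (hm x (List.mem_cons_self)).1
      · have : r.getLastD x ∈ x :: r := List.getLastD_mem_cons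
        exact (hm _ this).2
    have h2 := h1.trans ((eVariationOn.mono K hsub))
    rw [ENNReal.ofReal_le_iff_le_toReal hKr] at h2
    exact h2

lemma polyLen_range {n : ℕ} : ∀ (m : ℕ) (v : ℕ → EuclideanSpace ℝ (Fin n)),
    polyLen ((List.range (m+1)).map v) = ∑ i ∈ Finset.range m, ‖v (i+1) - v i‖
  | 0, v => by simp [polyLen]
  | (m+1), v => by
    have e1 : List.range (m+2) = 0 :: (List.range (m+1)).map Nat.succ :=
      List.range_succ_eq_map
    have e2 : List.range (m+1) = 0 :: (List.range m).map Nat.succ :=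
      List.range_succ_eq_map
    have key : (List.range (m+2)).map v
        = v 0 :: (List.range (m+1)).map (fun i => v (i+1)) := by
      rw [e1]
      simp [List.map_map, Function.comp_def]
    have key2 : (List.range (m+1)).map (fun i => v (i+1))
        = v 1 :: ((List.range m).map Nat.succ).map (fun i => v (i+1)) := by
      rw [e2]; simp
    have hpl : polyLen ((List.range (m+2)).map v)
        = ‖v 1 - v 0‖ + polyLen ((List.range (m+1)).map (fun i => v (i+1))) := by
      rw [key, key2]
      rfl
    rw [hpl, polyLen_range m (fun i => v (i+1)), Finset.sum_range_succ']
    simp only [Nat.zero_add]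
    ring

/-- Below the arclength, there is an inscribed polygon of larger length. -/
lemma exists_inscribed {n : ℕ} (K : ℝ → EuclideanSpace ℝ (Fin n))
    (hKr : BoundedVariationOn K (Set.Icc 0 1)) {c : ℝ} (hc : c < len K) :
    ∃ l : List ℝ, l.Chain' (· ≤ ·) ∧ (∀ u ∈ l, u ∈ Set.Icc (0:ℝ) 1) ∧
      c < polyLen (l.map K) := by
  rcases lt_or_ge c 0 with hc0 | hc0
  · exact ⟨[], List.isChain_nil, by simp, by simpa [polyLen] using hc0⟩
  · have h1 : ENNReal.ofReal c < eVariationOn K (Set.Icc 0 1) := by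
      rw [ENNReal.ofReal_lt_iff_lt_toReal hc0 hKr]
      exact hc
    rw [eVariationOn, lt_iSup_iff] at h1
    obtain ⟨⟨m, u, hu, us⟩, hlt⟩ := h1
    simp only at hlt
    have hS : ∑ i ∈ Finset.range m, edist (K (u (i+1))) (K (u i))
        = ENNReal.ofReal (∑ i ∈ Finset.range m, ‖K (u (i+1)) - K (u i)‖) := by
      rw [ENNReal.ofReal_sum_of_nonneg (fun i _ => norm_nonneg _)]
      congr 1
      ext i
      rw [edist_dist, dist_eq_norm]
    rw [hS, ENNReal.ofReal_lt_ofReal_iff_of_nonneg hc0] at hlt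
    refine ⟨(List.range (m+1)).map u, ?_, ?_, ?_⟩
    · unfold List.Chain'; rw [List.isChain_map, List.isChain_range_succ]
      exact fun i _ => hu (Nat.le_succ i)
    · intro x hx
      obtain ⟨i, _, rfl⟩ := List.mem_map.1 hx
      exact us i
    · rw [List.map_map]
      have := polyLen_range m (K ∘ u)
      rw [this]
      exact hlt

open scoped Classical in
/-- Remove from the list of parameters consecutive entries whose `f`-images are
equal. -/
def ddp {n : ℕ} (f : ℝ → EuclideanSpace ℝ (Fin n)) : List ℝ → List ℝ
  | a :: b :: l => if f a = f b then ddp f (b :: l) else a :: ddp f (b :: l)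
  | l => l

lemma ddp_mem {n : ℕ} (f : ℝ → EuclideanSpace ℝ (Fin n)) :
    ∀ l : List ℝ, ∀ x ∈ ddp f l, x ∈ l
  | [], x, hx => hx
  | [a], x, hx => hx
  | a :: b :: l, x, hx => by
    rw [ddp] at hx
    split_ifs at hx with h
    · exact List.mem_cons_of_mem a (ddp_mem f (b :: l) x hx)
    · rcases List.mem_cons.1 hx with rfl | hx
      · exact List.mem_cons_self
      · exact List.mem_cons_of_mem a (ddp_mem f (b :: l) x hx)

lemma ddp_head {n : ℕ} (f : ℝ → EuclideanSpace ℝ (Fin n)) :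
    ∀ (l : List ℝ) (b : ℝ), ∃ b' t', ddp f (b :: l) = b' :: t' ∧ f b' = f b
  | [], b => ⟨b, [], rfl, rfl⟩
  | c :: l, b => by
    rw [ddp]
    split_ifs with h
    · obtain ⟨b', t', he, hf⟩ := ddp_head f l c
      exact ⟨b', t', he, hf.trans h.symm⟩
    · exact ⟨b, _, rfl, rfl⟩

lemma ddp_polyLen {n : ℕ} (f : ℝ → EuclideanSpace ℝ (Fin n)) :
    ∀ l : List ℝ, polyLen ((ddp f l).map f) = polyLen (l.map f)
  | [] => rfl
  | [a] => rfl
  | a :: b :: l => by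
    rw [ddp]
    split_ifs with h
    · have IH := ddp_polyLen f (b :: l)
      have : polyLen ((a :: b :: l).map f) = ‖f b - f a‖ + polyLen ((b :: l).map f) := rfl
      rw [this, h, sub_self, norm_zero, zero_add]
      exact IH
    · obtain ⟨b', t', he, hfb⟩ := ddp_head f l b
      have IH := ddp_polyLen f (b :: l)
      rw [he] at IH ⊢
      have h1 : polyLen ((a :: b' :: t').map f) = ‖f b' - f a‖ + polyLen ((b' :: t').map f) := rfl
      have h2 : polyLen ((a :: b :: l).map f) = ‖f b - f a‖ + polyLen ((b :: l).map f) := rfl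
      rw [h1, h2, hfb, IH]

lemma ddp_chain_lt {n : ℕ} (f : ℝ → EuclideanSpace ℝ (Fin n)) :
    ∀ l : List ℝ, l.Chain' (· ≤ ·) → (ddp f l).Chain' (· < ·)
  | [], _ => List.isChain_nil
  | [a], _ => List.isChain_singleton a
  | a :: b :: l, hc => by
    have hab : a ≤ b := (List.isChain_cons_cons.1 hc).1
    have htail : (b :: l).Chain' (· ≤ ·) := (List.isChain_cons_cons.1 hc).2
    have hpw : (a :: b :: l).Pairwise (· ≤ ·) := List.isChain_iff_pairwise.1 hc
    rw [ddp]
    split_ifs with h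
    · exact ddp_chain_lt f (b :: l) htail
    · unfold List.Chain'; rw [List.isChain_cons]
      refine ⟨?_, ddp_chain_lt f (b :: l) htail⟩
      intro y hy
      obtain ⟨b', t', he, hfb⟩ := ddp_head f l b
      have hmem : b' ∈ b :: l := ddp_mem f (b :: l) b' (by rw [he]; exact List.mem_cons_self)
      have hle : a ≤ b' := (List.pairwise_cons.1 hpw).1 b' hmem
      have hne : a ≠ b' := by
        intro hay
        rw [← hay] at hfb
        exact h hfb
      have hlt : a < b' := lt_of_le_of_ne hle hne
      rw [he] at hy
      simp only [List.head?_cons, Option.mem_def, Option.some.injEq] at hy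
      subst hy
      exact hlt

lemma ddp_chain_ne {n : ℕ} (f : ℝ → EuclideanSpace ℝ (Fin n)) :
    ∀ l : List ℝ, ((ddp f l).map f).Chain' (· ≠ ·)
  | [] => List.isChain_nil
  | [a] => List.isChain_singleton _
  | a :: b :: l => by
    rw [ddp]
    split_ifs with h
    · exact ddp_chain_ne f (b :: l)
    · unfold List.Chain'; rw [List.map_cons, List.isChain_cons]
      refine ⟨?_, ddp_chain_ne f (b :: l)⟩
      intro y hy
      obtain ⟨b', t', he, hfb⟩ := ddp_head f l b
      have hgoal : f a ≠ f b' := by rw [hfb]; exact h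
      rw [he, List.map_cons] at hy
      simp only [List.head?_cons, Option.mem_def, Option.some.injEq] at hy
      subst hy
      exact hgoal

lemma forall₂_map_map {n : ℕ} (R : EuclideanSpace ℝ (Fin n) → EuclideanSpace ℝ (Fin n) → Prop)
    (f g : ℝ → EuclideanSpace ℝ (Fin n)) :
    ∀ l : List ℝ, (∀ x ∈ l, R (f x) (g x)) → List.Forall₂ R (l.map f) (l.map g)
  | [], _ => List.Forall₂.nil
  | a :: l, h => List.Forall₂.cons (h a (List.mem_cons_self))
      (forall₂_map_map R f g l fun x hx => h x (List.mem_cons_of_mem a hx))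

lemma chain_map_le {g : ℝ → ℝ} {P : ℝ → Prop}
    (hg : ∀ x y, P x → P y → x < y → g x ≤ g y) :
    ∀ l : List ℝ, (∀ u ∈ l, P u) → l.Chain' (· < ·) → (l.map g).Chain' (· ≤ ·)
  | [], _, _ => List.isChain_nil
  | [a], _, _ => List.isChain_singleton _
  | a :: b :: l, hm, hc => by
    unfold List.Chain'; rw [List.map_cons, List.map_cons, List.isChain_cons_cons]
    constructor
    · exact hg a b (hm a (by simp)) (hm b (by simp)) (List.isChain_cons_cons.1 hc).1
    · rw [← List.map_cons]
      exact chain_map_le hg (b :: l) (fun u hu => hm u (List.mem_cons_of_mem a hu))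
        (List.isChain_cons_cons.1 hc).2

/-- For rectifiable curves `K, L : [0,1] → ℝⁿ` of finite total
curvature, `|len K − len L| ≤ δ(K,L) · (π · max {TC K, TC L} + 2)`, where `δ`
is the Fréchet distance. -/
theorem len_diff_le_frechet_mul {n : ℕ} (K L : ℝ → EuclideanSpace ℝ (Fin n))
    (hKc : ContinuousOn K (Set.Icc 0 1)) (hLc : ContinuousOn L (Set.Icc 0 1))
    (hKr : BoundedVariationOn K (Set.Icc 0 1))
    (hLr : BoundedVariationOn L (Set.Icc 0 1))
    (hKtc : BddAbove (tcSet K)) (hLtc : BddAbove (tcSet L)) :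
    |len K - len L| ≤ frechetDist K L * (Real.pi * max (totCurv K) (totCurv L) + 2) := by
  classical
  set M := max (totCurv K) (totCurv L) with hM
  have h0K : (0:ℝ) ∈ tcSet K := ⟨[], List.isChain_nil, by simp, rfl⟩
  have h0L : (0:ℝ) ∈ tcSet L := ⟨[], List.isChain_nil, by simp, rfl⟩
  have hTCK : 0 ≤ totCurv K := le_csSup hKtc h0K
  have hTCL : 0 ≤ totCurv L := le_csSup hLtc h0L
  have hM0 : 0 ≤ M := le_trans hTCK (le_max_left _ _)
  set C := Real.pi * M + 2 with hC
  have hpi1 : (1:ℝ) ≤ Real.pi := by linarith [Real.pi_gt_three]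
  have hC2 : 2 ≤ C := by nlinarith
  have hC0 : 0 < C := by linarith
  -- the core estimate, for any admissible reparametrization
  have core : ∀ σ : {f : ℝ → ℝ // ContinuousOn f (Set.Icc 0 1) ∧
      StrictMonoOn f (Set.Icc 0 1) ∧ f 0 = 0 ∧ f 1 = 1},
      |len K - len L| ≤ (⨆ t : Set.Icc (0:ℝ) 1, ‖K t - L (σ.1 t)‖) * C := by
    rintro ⟨σ, hσc, hσm, hσ0, hσ1⟩
    set ε := ⨆ t : Set.Icc (0:ℝ) 1, ‖K t - L (σ t)‖ with hεdef
    have hσmap : ∀ x ∈ Set.Icc (0:ℝ) 1, σ x ∈ Set.Icc (0:ℝ) 1 := by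
      intro x hx
      have h01 : (0:ℝ) ∈ Set.Icc (0:ℝ) 1 := Set.left_mem_Icc.2 zero_le_one
      have h11 : (1:ℝ) ∈ Set.Icc (0:ℝ) 1 := Set.right_mem_Icc.2 zero_le_one
      constructor
      · rw [← hσ0]; exact hσm.monotoneOn h01 hx hx.1
      · rw [← hσ1]; exact hσm.monotoneOn hx h11 hx.2
    -- the sup is a genuine bound
    have hgK : Continuous fun t : Set.Icc (0:ℝ) 1 => K t := hKc.restrict
    have hgL : Continuous fun t : Set.Icc (0:ℝ) 1 => L (σ t) :=
      (hLc.comp hσc hσmap).restrict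
    have hg : Continuous fun t : Set.Icc (0:ℝ) 1 => ‖K t - L (σ t)‖ :=
      (hgK.sub hgL).norm
    have hbdd : BddAbove (Set.range fun t : Set.Icc (0:ℝ) 1 => ‖K t - L (σ t)‖) :=
      (isCompact_range hg).bddAbove
    have hεb : ∀ t ∈ Set.Icc (0:ℝ) 1, ‖K t - L (σ t)‖ ≤ ε := by
      intro t ht
      exact le_ciSup hbdd (⟨t, ht⟩ : Set.Icc (0:ℝ) 1)
    have hε0 : 0 ≤ ε :=
      le_trans (norm_nonneg _) (hεb 0 (Set.left_mem_Icc.2 zero_le_one))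
    -- Direction 1 : len K ≤ len L + ε * C
    have dir1 : len K ≤ len L + ε * C := by
      apply le_of_forall_lt
      intro c hc
      obtain ⟨l, hl_ch, hl_mem, hl_len⟩ := exists_inscribed K hKr hc
      set t := ddp K l with ht
      have ht_lt : t.Chain' (· < ·) := ddp_chain_lt K l hl_ch
      have ht_mem : ∀ u ∈ t, u ∈ Set.Icc (0:ℝ) 1 := fun u hu => hl_mem u (ddp_mem K l u hu)
      have hp_len : polyLen (t.map K) = polyLen (l.map K) := ddp_polyLen K l
      have hp_ne : (t.map K).Chain' (· ≠ ·) := ddp_chain_ne K l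
      have hf2 : List.Forall₂ (fun x y => ‖x - y‖ ≤ ε) (t.map K) (t.map fun x => L (σ x)) :=
        forall₂_map_map _ _ _ t fun x hx => hεb x (ht_mem x hx)
      have hkey := key hε0 hf2 hp_ne
      have hturn : turnSum (t.map K) ≤ totCurv K :=
        le_csSup hKtc ⟨t, ht_lt, ht_mem, rfl⟩
      have hq : polyLen (t.map fun x => L (σ x)) ≤ len L := by
        have hmm : (t.map fun x => L (σ x)) = (t.map σ).map L := by
          rw [List.map_map]; rfl
        rw [hmm]
        apply polyLen_le_len L hLr
        · exact chain_map_le (fun x y hx hy hxy => (hσm hx hy hxy).le) t ht_mem ht_lt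
        · intro u hu
          obtain ⟨x, hx, rfl⟩ := List.mem_map.1 hu
          exact hσmap x (ht_mem x hx)
      have hbound : ε * (turnSum (t.map K) + 2) ≤ ε * C := by
        apply mul_le_mul_of_nonneg_left _ hε0
        have h1 : turnSum (t.map K) ≤ M := hturn.trans (le_max_left _ _)
        have h2 : M ≤ Real.pi * M := by nlinarith
        linarith
      calc c < polyLen (l.map K) := hl_len
        _ = polyLen (t.map K) := hp_len.symm
        _ ≤ polyLen (t.map fun x => L (σ x)) + ε * (turnSum (t.map K) + 2) := hkey
        _ ≤ len L + ε * C := add_le_add hq hbound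
    -- Direction 2 : len L ≤ len K + ε * C
    have dir2 : len L ≤ len K + ε * C := by
      have hsurj : ∀ s ∈ Set.Icc (0:ℝ) 1, ∃ x, x ∈ Set.Icc (0:ℝ) 1 ∧ σ x = s := by
        intro s hs
        have := intermediate_value_Icc zero_le_one hσc
        rw [hσ0, hσ1] at this
        obtain ⟨x, hx, hxe⟩ := this hs
        exact ⟨x, hx, hxe⟩
      choose! τ hτmem hτeq using hsurj
      apply le_of_forall_lt
      intro c hc
      obtain ⟨l, hl_ch, hl_mem, hl_len⟩ := exists_inscribed L hLr hc
      set s := ddp L l with hsdef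
      have hs_lt : s.Chain' (· < ·) := ddp_chain_lt L l hl_ch
      have hs_mem : ∀ u ∈ s, u ∈ Set.Icc (0:ℝ) 1 := fun u hu => hl_mem u (ddp_mem L l u hu)
      have hp_len : polyLen (s.map L) = polyLen (l.map L) := ddp_polyLen L l
      have hp_ne : (s.map L).Chain' (· ≠ ·) := ddp_chain_ne L l
      have hf2 : List.Forall₂ (fun x y => ‖x - y‖ ≤ ε) (s.map L) (s.map fun x => K (τ x)) := by
        apply forall₂_map_map _ _ _ s
        intro x hx
        have hxI := hs_mem x hx
        have h1 : σ (τ x) = x := hτeq x hxI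
        have h2 : τ x ∈ Set.Icc (0:ℝ) 1 := hτmem x hxI
        calc ‖L x - K (τ x)‖ = ‖K (τ x) - L (σ (τ x))‖ := by rw [h1, norm_sub_rev]
          _ ≤ ε := hεb (τ x) h2
      have hkey := key hε0 hf2 hp_ne
      have hturn : turnSum (s.map L) ≤ totCurv L :=
        le_csSup hLtc ⟨s, hs_lt, hs_mem, rfl⟩
      have hq : polyLen (s.map fun x => K (τ x)) ≤ len K := by
        have hmm : (s.map fun x => K (τ x)) = (s.map τ).map K := by
          rw [List.map_map]; rfl
        rw [hmm]
        apply polyLen_le_len K hKr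
        · apply chain_map_le _ s hs_mem hs_lt
          intro x y hx hy hxy
          by_contra hcon
          push_neg at hcon
          have := hσm.monotoneOn (hτmem y hy) (hτmem x hx) hcon.le
          rw [hτeq x hx, hτeq y hy] at this
          exact absurd this (not_le.2 hxy)
        · intro u hu
          obtain ⟨x, hx, rfl⟩ := List.mem_map.1 hu
          exact hτmem x (hs_mem x hx)
      have hbound : ε * (turnSum (s.map L) + 2) ≤ ε * C := by
        apply mul_le_mul_of_nonneg_left _ hε0
        have h1 : turnSum (s.map L) ≤ M := hturn.trans (le_max_right _ _)
        have h2 : M ≤ Real.pi * M := by nlinarith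
        linarith
      calc c < polyLen (l.map L) := hl_len
        _ = polyLen (s.map L) := hp_len.symm
        _ ≤ polyLen (s.map fun x => K (τ x)) + ε * (turnSum (s.map L) + 2) := hkey
        _ ≤ len K + ε * C := add_le_add hq hbound
    rw [abs_sub_le_iff]
    constructor <;> linarith
  -- conclude via the infimum
  haveI : Nonempty {f : ℝ → ℝ // ContinuousOn f (Set.Icc 0 1) ∧
      StrictMonoOn f (Set.Icc 0 1) ∧ f 0 = 0 ∧ f 1 = 1} :=
    ⟨⟨id, continuous_id.continuousOn, fun x _ y _ h => h, rfl, rfl⟩⟩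
  have hdiv : |len K - len L| / C ≤ frechetDist K L := by
    apply le_ciInf
    intro σ
    rw [div_le_iff₀ hC0]
    exact core σ
  rw [div_le_iff₀ hC0] at hdiv
  exact hdiv
end
end

section
/- Let γ be a curve of finite total curvature in ℝⁿ and define its π-distance π-d(γ) as the supremum of all ℓ > 0 such that every subarc of γ whose endpoints are at distance less than ℓ has total curvature less than π. Then any square-like quadrilateral inscribed in γ (four points on γ in cyclic order forming equal sides and equal diagonals) has side length at least π-d(γ). -/
noncomputable section

/-- For a closed curve given by a `1`-periodic map `γ : ℝ → ℝⁿ`, the set of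
turning-angle sums of polygons inscribed in the open subarc `(a, b)`. -/
def arcTCSet {n : ℕ} (γ : ℝ → EuclideanSpace ℝ (Fin n)) (a b : ℝ) : Set ℝ :=
  {x | ∃ t : List ℝ, t.Chain' (· < ·) ∧ (∀ u ∈ t, u ∈ Set.Ioo a b) ∧
    x = turnSum (t.map γ)}

/-- The total curvature `κ(γ, a, b)` of the open subarc `(a, b)` of the closed
curve `γ`. -/
def arcTC {n : ℕ} (γ : ℝ → EuclideanSpace ℝ (Fin n)) (a b : ℝ) : ℝ :=
  sSup (arcTCSet γ a b)

/-- The set of turning-angle sums of polygons inscribed in the closed curve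
`γ`, with vertex parameters drawn from some window `[a, a+1]` of one period. -/
def circTCSet {n : ℕ} (γ : ℝ → EuclideanSpace ℝ (Fin n)) : Set ℝ :=
  {x | ∃ (a : ℝ) (t : List ℝ), t.Chain' (· < ·) ∧
    (∀ u ∈ t, u ∈ Set.Icc a (a + 1)) ∧ x = turnSum (t.map γ)}

/-- A closed curve has finite total curvature when the turning-angle sums of
its inscribed polygons are bounded above. -/
def FiniteTotalCurvature {n : ℕ} (γ : ℝ → EuclideanSpace ℝ (Fin n)) : Prop :=
  BddAbove (circTCSet γ)

/-- The `π`-distance of a closed curve `γ`: the supremum of all `ℓ` such that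
every open subarc of `γ` whose endpoints lie at distance less than `ℓ` has
total curvature less than `π`. -/
def piDist {n : ℕ} (γ : ℝ → EuclideanSpace ℝ (Fin n)) : ℝ :=
  sSup {ℓ : ℝ | ∀ a b : ℝ, a < b → b < a + 1 → ‖γ a - γ b‖ < ℓ →
    arcTC γ a b < Real.pi}

lemma pi_div_two_le_angle' {n : ℕ} (u v : EuclideanSpace ℝ (Fin n))
    (h : inner ℝ u v ≤ (0:ℝ)) : Real.pi / 2 ≤ InnerProductGeometry.angle u v := by
  rw [InnerProductGeometry.angle, Real.arccos_eq_pi_div_two_sub_arcsin]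
  have : Real.arcsin (inner ℝ u v / (‖u‖ * ‖v‖)) ≤ 0 :=
    Real.arcsin_nonpos.2
      (div_nonpos_iff.2 (Or.inr ⟨h, mul_nonneg (norm_nonneg _) (norm_nonneg _)⟩))
  linarith

lemma turn_ge_pi {n : ℕ} (p q r s : EuclideanSpace ℝ (Fin n))
    (h2 : ‖p - q‖ = ‖q - r‖) (h3 : ‖q - r‖ = ‖r - s‖) (h4 : ‖r - s‖ = ‖s - p‖)
    (hd : ‖p - r‖ = ‖q - s‖) :
    Real.pi ≤ turnSum [p, q, r, s] := by
  have hpt : ‖p - r‖ * ‖q - s‖ ≤ ‖p - q‖ * ‖r - s‖ + ‖q - r‖ * ‖p - s‖ := by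
    simpa [dist_eq_norm] using EuclideanGeometry.mul_dist_le_mul_dist_add_mul_dist p q r s
  have hps : ‖p - s‖ = ‖s - p‖ := norm_sub_rev _ _
  rw [hps, ← h4, ← h3, ← h2, ← hd] at hpt
  have e1 : ‖(q - p) + (r - q)‖ ^ 2 = ‖q - p‖ ^ 2 + 2 * inner ℝ (q - p) (r - q) + ‖r - q‖ ^ 2 :=
    norm_add_sq_real _ _
  have e2 : ‖(r - q) + (s - r)‖ ^ 2 = ‖r - q‖ ^ 2 + 2 * inner ℝ (r - q) (s - r) + ‖s - r‖ ^ 2 :=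
    norm_add_sq_real _ _
  have c1 : (q - p) + (r - q) = -(p - r) := by abel
  have c2 : (r - q) + (s - r) = -(q - s) := by abel
  rw [c1, norm_neg] at e1
  rw [c2, norm_neg, ← hd] at e2
  have n1 : ‖q - p‖ = ‖p - q‖ := norm_sub_rev _ _
  have n2 : ‖r - q‖ = ‖q - r‖ := norm_sub_rev _ _
  have n3 : ‖s - r‖ = ‖r - s‖ := norm_sub_rev _ _
  rw [n1, n2, ← h2] at e1
  rw [n2, n3, ← h3, ← h2] at e2
  have i1 : inner ℝ (q - p) (r - q) ≤ (0:ℝ) := by nlinarith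
  have i2 : inner ℝ (r - q) (s - r) ≤ (0:ℝ) := by nlinarith
  have a1 := pi_div_two_le_angle' _ _ i1
  have a2 := pi_div_two_le_angle' _ _ i2
  have hts : turnSum [p, q, r, s] =
      InnerProductGeometry.angle (q - p) (r - q) +
        (InnerProductGeometry.angle (r - q) (s - r) + 0) := by
    simp [turnSum]
  rw [hts]
  linarith


/-- Any square-like quadrilateral inscribed in a closed curve
`γ` of finite total curvature has side length at least the `π`-distance of
`γ`. -/
theorem inscribed_slq_sidelength_ge_piDist {n : ℕ}
    (γ : ℝ → EuclideanSpace ℝ (Fin n))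
    (hper : Function.Periodic γ 1) (hcont : Continuous γ)
    (hftc : FiniteTotalCurvature γ)
    (t₁ t₂ t₃ t₄ : ℝ) (h12 : t₁ < t₂) (h23 : t₂ < t₃) (h34 : t₃ < t₄)
    (h41 : t₄ < t₁ + 1)
    (hside₂ : ‖γ t₁ - γ t₂‖ = ‖γ t₂ - γ t₃‖)
    (hside₃ : ‖γ t₂ - γ t₃‖ = ‖γ t₃ - γ t₄‖)
    (hside₄ : ‖γ t₃ - γ t₄‖ = ‖γ t₄ - γ t₁‖)
    (hdiag : ‖γ t₁ - γ t₃‖ = ‖γ t₂ - γ t₄‖) :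
    piDist γ ≤ ‖γ t₁ - γ t₂‖ := by
  have hs41 : ‖γ t₄ - γ t₁‖ = ‖γ t₁ - γ t₂‖ := (hside₂.trans (hside₃.trans hside₄)).symm
  refine csSup_le ⟨0, fun a b _ _ h => absurd h (not_lt.2 (norm_nonneg _))⟩ ?_
  intro ℓ hℓ
  by_contra hlt
  push_neg at hlt
  have hf : Continuous (fun ε : ℝ => ‖γ (t₁ - ε) - γ (t₄ + ε)‖) := by
    apply Continuous.norm
    exact (hcont.comp (by continuity)).sub (hcont.comp (by continuity))
  have h0 : ‖γ (t₁ - 0) - γ (t₄ + 0)‖ < ℓ := by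
    have : ‖γ t₁ - γ t₄‖ = ‖γ t₁ - γ t₂‖ := (norm_sub_rev _ _).trans hs41
    simpa [this] using hlt
  have hopen : IsOpen {ε : ℝ | ‖γ (t₁ - ε) - γ (t₄ + ε)‖ < ℓ} :=
    isOpen_lt hf continuous_const
  obtain ⟨δ, hδpos, hδ⟩ := Metric.isOpen_iff.1 hopen 0 h0
  set ε := min (δ / 2) ((t₁ + 1 - t₄) / 4) with hε
  have hεpos : 0 < ε := lt_min (by linarith) (by linarith)
  have hεδ : ε < δ := lt_of_le_of_lt (min_le_left _ _) (by linarith)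
  have hε4 : ε ≤ (t₁ + 1 - t₄) / 4 := min_le_right _ _
  have hdist : ‖γ (t₁ - ε) - γ (t₄ + ε)‖ < ℓ := by
    have : ε ∈ Metric.ball (0:ℝ) δ := by
      simp [Real.dist_eq, abs_of_pos hεpos, hεδ]
    exact hδ this
  set a := t₁ - ε
  set b := t₄ + ε
  have hab : a < b := by simp only [a, b]; linarith
  have hba : b < a + 1 := by simp only [a, b]; linarith
  have hTC : arcTC γ a b < Real.pi := hℓ a b hab hba hdist
  have hmemIoo : ∀ u ∈ [t₁, t₂, t₃, t₄], u ∈ Set.Ioo a b := by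
    intro u hu
    simp only [List.mem_cons, List.not_mem_nil, or_false] at hu
    rcases hu with rfl | rfl | rfl | rfl <;>
      exact ⟨by simp only [a]; linarith, by simp only [b]; linarith⟩
  have hchain : List.Chain' (· < ·) [t₁, t₂, t₃, t₄] := by
    simp [List.Chain', List.isChain_cons_cons, h12, h23, h34]
  have hmem : turnSum ([t₁, t₂, t₃, t₄].map γ) ∈ arcTCSet γ a b :=
    ⟨[t₁, t₂, t₃, t₄], hchain, hmemIoo, rfl⟩
  have hbdd : BddAbove (arcTCSet γ a b) := by
    refine hftc.mono ?_
    rintro x ⟨t, hch, hmem', rfl⟩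
    exact ⟨a, t, hch, fun u hu => ⟨(hmem' u hu).1.le, (hmem' u hu).2.le.trans (by linarith)⟩, rfl⟩
  have hpi : Real.pi ≤ turnSum ([t₁, t₂, t₃, t₄].map γ) := by
    simpa using turn_ge_pi (γ t₁) (γ t₂) (γ t₃) (γ t₄) hside₂ hside₃ hside₄ hdiag
  have : Real.pi ≤ arcTC γ a b := hpi.trans (le_csSup hbdd hmem)
  linarith
end
end

section
/- If the exterior turning-angle sum at the two interior vertices of the open path p→q→r→s of a square-like quadrilateral equals exactly π, then the four points p,q,r,s are coplanar (lie in a 2-dimensional affine subspace) and form a square. -/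
/-- If the sum of the exterior turning angles at the two
interior vertices of the open path `p → q → r → s` of a square-like
quadrilateral (unit sides, equal diagonals) equals exactly `π`, then the four
points are coplanar and form a square (diagonals of length `√2`). -/
theorem slq_turning_eq_pi_is_square {n : ℕ} (p q r s : EuclideanSpace ℝ (Fin n))
    (h1 : ‖p - q‖ = 1) (h2 : ‖q - r‖ = 1) (h3 : ‖r - s‖ = 1) (h4 : ‖s - p‖ = 1)
    (h5 : ‖p - r‖ = ‖q - s‖)
    (hc1 : ¬ Collinear ℝ ({p, q, r} : Set (EuclideanSpace ℝ (Fin n))))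
    (hc2 : ¬ Collinear ℝ ({q, r, s} : Set (EuclideanSpace ℝ (Fin n))))
    (heq : (Real.pi - EuclideanGeometry.angle p q r) +
        (Real.pi - EuclideanGeometry.angle q r s) = Real.pi) :
    Coplanar ℝ ({p, q, r, s} : Set (EuclideanSpace ℝ (Fin n))) ∧
    ‖p - r‖ = Real.sqrt 2 ∧ ‖q - s‖ = Real.sqrt 2 := by
  have h2' : ‖r - q‖ = 1 := by rw [norm_sub_rev]; exact h2
  have h3' : ‖s - r‖ = 1 := by rw [norm_sub_rev]; exact h3
  have dpr : ‖p - r‖ ^ 2 = 2 - 2 * (inner ℝ (p - q) (r - q) : ℝ) := by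
    have hd : p - r = (p - q) - (r - q) := by abel
    rw [hd, @norm_sub_sq_real, h1, h2']; ring
  have dqs : ‖q - s‖ ^ 2 = 2 - 2 * (inner ℝ (q - r) (s - r) : ℝ) := by
    have hd : q - s = (q - r) - (s - r) := by abel
    rw [hd, @norm_sub_sq_real, h2, h3']; ring
  have hinner : (inner ℝ (p - q) (r - q) : ℝ) = (inner ℝ (q - r) (s - r) : ℝ) := by
    have h5' : ‖p - r‖ ^ 2 = ‖q - s‖ ^ 2 := by rw [h5]
    rw [dpr, dqs] at h5'; linarith
  -- the two angles are equal
  have hang : EuclideanGeometry.angle p q r = EuclideanGeometry.angle q r s := by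
    unfold EuclideanGeometry.angle InnerProductGeometry.angle
    rw [vsub_eq_sub, vsub_eq_sub, vsub_eq_sub, vsub_eq_sub, h1, h2', h2, h3', hinner]
  have hpi : EuclideanGeometry.angle p q r = Real.pi / 2 := by
    rw [hang] at heq; linarith
  have hcos : Real.cos (EuclideanGeometry.angle p q r)
      = (inner ℝ (p - q) (r - q) : ℝ) / (‖p - q‖ * ‖r - q‖) :=
    InnerProductGeometry.cos_angle _ _
  have hab : (inner ℝ (p - q) (r - q) : ℝ) = 0 := by
    rw [hpi, Real.cos_pi_div_two, h1, h2', mul_one, div_one] at hcos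
    exact hcos.symm
  -- diagonal lengths
  have hpr2 : ‖p - r‖ ^ 2 = 2 := by rw [dpr, hab]; ring
  have hpr : ‖p - r‖ = Real.sqrt 2 := by
    have h0 : (0:ℝ) ≤ 2 := by norm_num
    nlinarith [Real.sq_sqrt h0, Real.sqrt_nonneg 2, norm_nonneg (p - r)]
  have hqs : ‖q - s‖ = Real.sqrt 2 := by rw [← h5]; exact hpr
  -- determine s : s = (r - q) + p
  have hsq2 : ‖s - q‖ ^ 2 = 2 := by
    rw [norm_sub_rev, hqs, Real.sq_sqrt]; norm_num
  have hca : (inner ℝ (s - q) (p - q) : ℝ) = 1 := by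
    have hd : s - p = (s - q) - (p - q) := by abel
    have h' : ‖(s - q) - (p - q)‖ ^ 2 = 1 := by rw [← hd, h4]; norm_num
    rw [@norm_sub_sq_real, hsq2, h1] at h'; linarith
  have hcb : (inner ℝ (s - q) (r - q) : ℝ) = 1 := by
    have hd : s - r = (s - q) - (r - q) := by abel
    have h' : ‖(s - q) - (r - q)‖ ^ 2 = 1 := by rw [← hd, h3']; norm_num
    rw [@norm_sub_sq_real, hsq2, h2'] at h'; linarith
  have hs : s = (r - q) + p := by
    have hspn : ‖(s - p) - (r - q)‖ ^ 2 = 0 := by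
      have hd : s - p = (s - q) - (p - q) := by abel
      rw [@norm_sub_sq_real, h4, h2', hd, inner_sub_left, hcb, hab]; ring
    have hz : (s - p) - (r - q) = 0 := by
      have := pow_eq_zero_iff (n := 2) (by norm_num) |>.mp hspn
      exact norm_eq_zero.mp this
    have := sub_eq_zero.mp hz
    rw [sub_eq_iff_eq_add] at this
    exact this
  have hmem : s ∈ affineSpan ℝ ({p, q, r} : Set (EuclideanSpace ℝ (Fin n))) := by
    have hp : p ∈ affineSpan ℝ ({p, q, r} : Set (EuclideanSpace ℝ (Fin n))) :=
      subset_affineSpan ℝ _ (by simp)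
    have hq : q ∈ affineSpan ℝ ({p, q, r} : Set (EuclideanSpace ℝ (Fin n))) :=
      subset_affineSpan ℝ _ (by simp)
    have hr : r ∈ affineSpan ℝ ({p, q, r} : Set (EuclideanSpace ℝ (Fin n))) :=
      subset_affineSpan ℝ _ (by simp)
    have hd : (r -ᵥ q : EuclideanSpace ℝ (Fin n)) ∈
        (affineSpan ℝ ({p, q, r} : Set (EuclideanSpace ℝ (Fin n)))).direction :=
      AffineSubspace.vsub_mem_direction hr hq
    have hmem' := AffineSubspace.vadd_mem_of_mem_direction hd hp
    have hval : (r -ᵥ q : EuclideanSpace ℝ (Fin n)) +ᵥ p = s := by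
      rw [vsub_eq_sub, vadd_eq_add, hs]
    rwa [hval] at hmem'
  have hset : ({p, q, r, s} : Set (EuclideanSpace ℝ (Fin n)))
      = insert s ({p, q, r} : Set (EuclideanSpace ℝ (Fin n))) := by
    ext x
    simp only [Set.mem_insert_iff, Set.mem_singleton_iff]
    tauto
  refine ⟨?_, hpr, hqs⟩
  rw [hset, coplanar_insert_iff_of_mem_affineSpan hmem]
  exact coplanar_triple (k := ℝ) p q r
end

section
/- For a quadrilateral pqrs in ℝⁿ with unit sides and equal diagonals of length d, the sum of turning angles of the open path p→q→r→s equals 2π − 4θ where θ = arcsin(d/2); consequently this sum is a strictly decreasing function of the diagonal length d on (0, √2]. -/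
open Real EuclideanGeometry

lemma arcsin_half_mem {d : ℝ} (hd0 : 0 < d) (hd2 : d ≤ Real.sqrt 2) :
    -1 ≤ d / 2 ∧ d / 2 ≤ 1 := by
  have h2 : Real.sqrt 2 ≤ 2 := by
    nlinarith [Real.sq_sqrt (by norm_num : (2:ℝ) ≥ 0), Real.sqrt_nonneg 2]
  constructor <;> nlinarith

lemma ang_eq {n : ℕ} (u v w : EuclideanSpace ℝ (Fin n)) (d : ℝ)
    (hd0 : 0 < d) (hd2 : d ≤ Real.sqrt 2)
    (h1 : ‖u - v‖ = 1) (h2 : ‖v - w‖ = 1) (h3 : ‖u - w‖ = d) :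
    EuclideanGeometry.angle u v w = 2 * Real.arcsin (d / 2) := by
  obtain ⟨hm1, hm2⟩ := arcsin_half_mem hd0 hd2
  have hlaw := EuclideanGeometry.law_cos u v w
  have h2' : ‖w - v‖ = 1 := by rw [norm_sub_rev]; exact h2
  rw [dist_eq_norm, dist_eq_norm, dist_eq_norm, h1, h2', h3] at hlaw
  have hcos : Real.cos (EuclideanGeometry.angle u v w) = 1 - d ^ 2 / 2 := by
    nlinarith [hlaw]
  have hsin : Real.sin (Real.arcsin (d / 2)) = d / 2 := Real.sin_arcsin hm1 hm2
  have hcos2 : Real.cos (2 * Real.arcsin (d / 2)) = 1 - d ^ 2 / 2 := by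
    rw [Real.cos_two_mul]
    have := Real.sin_sq_add_cos_sq (Real.arcsin (d / 2))
    nlinarith
  have ha1 : (0:ℝ) ≤ Real.arcsin (d / 2) := Real.arcsin_nonneg.2 (by linarith)
  have ha2 : Real.arcsin (d / 2) ≤ Real.pi / 2 := Real.arcsin_le_pi_div_two _
  apply Real.injOn_cos ⟨EuclideanGeometry.angle_nonneg u v w,
    EuclideanGeometry.angle_le_pi u v w⟩ ⟨by linarith, by linarith⟩
  rw [hcos, hcos2]

/-- For a quadrilateral `pqrs` in `ℝⁿ` with unit sides and
equal diagonals of length `d ∈ (0, √2]`, the sum of the turning angles of the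
open path `p → q → r → s` equals `2π − 4·arcsin(d/2)`; consequently this sum is
a strictly decreasing function of the diagonal length `d` on `(0, √2]`. -/
theorem slq_turning_formula {n : ℕ} (p q r s : EuclideanSpace ℝ (Fin n)) (d : ℝ)
    (hd0 : 0 < d) (hd2 : d ≤ Real.sqrt 2)
    (h1 : ‖p - q‖ = 1) (h2 : ‖q - r‖ = 1) (h3 : ‖r - s‖ = 1) (h4 : ‖s - p‖ = 1)
    (h5 : ‖p - r‖ = d) (h6 : ‖q - s‖ = d) :
    (Real.pi - EuclideanGeometry.angle p q r) +
        (Real.pi - EuclideanGeometry.angle q r s) =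
      2 * Real.pi - 4 * Real.arcsin (d / 2) ∧
    StrictAntiOn (fun x : ℝ => 2 * Real.pi - 4 * Real.arcsin (x / 2))
      (Set.Ioc 0 (Real.sqrt 2)) := by
  constructor
  · have ha := ang_eq p q r d hd0 hd2 h1 h2 h5
    have hb := ang_eq q r s d hd0 hd2 h2 h3 h6
    rw [ha, hb]; ring
  · intro a ha b hb hab
    obtain ⟨ha1, ha2⟩ := arcsin_half_mem ha.1 ha.2
    obtain ⟨hb1, hb2⟩ := arcsin_half_mem hb.1 hb.2
    have : Real.arcsin (a / 2) < Real.arcsin (b / 2) :=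
      Real.strictMonoOn_arcsin ⟨ha1, ha2⟩ ⟨hb1, hb2⟩ (by linarith)
    simp only []
    linarith
end
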